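/- Let E be a commutative ring in which 2 is invertible, let h be a finite-rank free E-module, and let s : h → h be an E-linear involution such that h = ker(s − 1) ⊕ ker(s + 1) with ker(s + 1) free of rank 1. Let E → E' be any ring homomorphism, let h' = E' ⊗_E h with the induced involution s' = id ⊗ s, and let S = Sym_E(h), S' = Sym_{E'}(h'). Then the natural E'-algebra map E' ⊗_E (S^s) → (S')^{s'} (induced by base change of the symmetric algebra) is an isomorphism onto the subalgebra of s'-invariants. -/

import Mathlib

universe u v w u' w'

open TensorProduct

/-- `S`, together with the `E`-linear map `ι : h →ₗ[E] S`, is a symmetric algebra of the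
`E`-module `h`: every `E`-linear map from `h` to a commutative `E`-algebra factors uniquely
through an `E`-algebra homomorphism out of `S`. -/
structure IsSymmetricAlgebraUP {E : Type u} [CommRing E] {h : Type v} [AddCommGroup h]
    [Module E h] {S : Type w} [CommRing S] [Algebra E S] (ι : h →ₗ[E] S) : Prop where
  existsUnique_lift : ∀ (A : Type (max u v w)) [CommRing A] [Algebra E A] (f : h →ₗ[E] A),
      ∃! g : S →ₐ[E] A, ∀ x : h, g (ι x) = f x

/-- `ULift` of a commutative ring as an algebra equivalence. -/
def uliftAlgEquiv {R : Type*} {A : Type*} [CommSemiring R] [CommRing A] [Algebra R A] :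
    ULift.{r} A ≃ₐ[R] A :=
  { ULift.ringEquiv with commutes' := fun _ => rfl }

theorem IsSymmetricAlgebraUP.adjoin_range_eq_top {E : Type u} [CommRing E] {h : Type v}
    [AddCommGroup h] [Module E h] {S : Type w} [CommRing S] [Algebra E S] {ι : h →ₗ[E] S}
    (hS : IsSymmetricAlgebraUP ι) : Algebra.adjoin E (Set.range ι) = ⊤ := by
  set B := Algebra.adjoin E (Set.range ι) with hB
  have hmem : ∀ x : h, ι x ∈ B := fun x => Algebra.subset_adjoin ⟨x, rfl⟩
  let ι₀ : h →ₗ[E] B := ι.codRestrict (Subalgebra.toSubmodule B) hmem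
  obtain ⟨G, hG, -⟩ := hS.existsUnique_lift (ULift.{max u v} B)
    (ULift.moduleEquiv.symm.toLinearMap.comp ι₀)
  let G₀ : S →ₐ[E] B := (uliftAlgEquiv (R := E)).toAlgHom.comp G
  have hG₀ : ∀ x : h, G₀ (ι x) = ι₀ x := by
    intro x
    have := hG x
    exact congrArg ULift.down this
  -- uniqueness argument: B.val.comp G₀ = AlgHom.id
  obtain ⟨L, -, hLuniq⟩ := hS.existsUnique_lift (ULift.{max u v} S)
    (ULift.moduleEquiv.symm.toLinearMap.comp ι)
  have h1 : ((uliftAlgEquiv (R := E)).symm.toAlgHom.comp (B.val.comp G₀)) =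
      (uliftAlgEquiv (R := E)).symm.toAlgHom.comp (AlgHom.id E S) := by
    have e1 := hLuniq ((uliftAlgEquiv (R := E)).symm.toAlgHom.comp (B.val.comp G₀))
      (fun x => by
        apply ULift.down_injective
        simp only [AlgHom.coe_comp, Function.comp_apply, AlgHom.coe_coe, Subalgebra.coe_val, hG₀ x]
        rfl)
    have e2 := hLuniq ((uliftAlgEquiv (R := E)).symm.toAlgHom.comp (AlgHom.id E S))
      (fun x => by
        apply ULift.down_injective
        rfl)
    rw [e1, e2]
  have h2 : ∀ x : S, B.val (G₀ x) = x := by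
    intro x
    have := congrArg (fun f => ((uliftAlgEquiv (R := E)).toAlgHom.comp f) x) h1
    simpa [uliftAlgEquiv] using this
  rw [eq_top_iff]
  intro x _
  have := h2 x
  rw [← this]
  exact (G₀ x).2

theorem IsSymmetricAlgebraUP.algHom_ext {E : Type u} [CommRing E] {h : Type v}
    [AddCommGroup h] [Module E h] {S : Type w} [CommRing S] [Algebra E S] {ι : h →ₗ[E] S}
    (hS : IsSymmetricAlgebraUP ι) {A : Type*} [Semiring A] [Algebra E A]
    {f₁ f₂ : S →ₐ[E] A} (hf : ∀ x : h, f₁ (ι x) = f₂ (ι x)) : f₁ = f₂ := by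
  have hle : Algebra.adjoin E (Set.range ι) ≤ AlgHom.equalizer f₁ f₂ := by
    apply Algebra.adjoin_le
    rintro _ ⟨x, rfl⟩
    exact hf x
  ext x
  have : x ∈ AlgHom.equalizer f₁ f₂ := hle (by rw [hS.adjoin_range_eq_top]; trivial)
  exact this

set_option maxHeartbeats 2000000 in
/-- Let `E` be a commutative ring in which `2` is invertible, `h` a finite-rank
free `E`-module, and `s` an `E`-linear involution of `h` with `h = ker(s-1) ⊕ ker(s+1)` and
`ker(s+1)` free of rank one.  Let `E → E'` be a ring homomorphism (i.e. `E'` an `E`-algebra),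
`h' = E' ⊗[E] h` with the involution `s' = id ⊗ s`, and let `S = Sym_E(h)`, `S' = Sym_{E'}(h')`
(presented by their universal properties, with induced involutions `σ`, `σ'` and natural map
`g : S → S'` with `g(ι x) = ι'(1 ⊗ x)`).  Then the natural `E'`-algebra map
`E' ⊗_E (S^s) → S'` is injective with image the subalgebra `(S')^{s'}` of `s'`-invariants. -/
theorem baseChange_invariants_of_involution
    {E : Type u} [CommRing E] (h2 : IsUnit (2 : E))
    {h : Type v} [AddCommGroup h] [Module E h] [Module.Free E h] [Module.Finite E h]
    (s : h →ₗ[E] h) (hs : s ∘ₗ s = LinearMap.id)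
    (hcompl : IsCompl (LinearMap.ker (s - LinearMap.id))
      (LinearMap.ker (s + LinearMap.id)))
    (hrank1 : Nonempty (Module.Basis (Fin 1) E (LinearMap.ker (s + LinearMap.id))))
    {E' : Type u'} [CommRing E'] [Algebra E E']
    {S : Type w} [CommRing S] [Algebra E S] (ι : h →ₗ[E] S)
    (hS : IsSymmetricAlgebraUP ι)
    {S' : Type w'} [CommRing S'] [Algebra E' S'] [Algebra E S'] [IsScalarTower E E' S']
    (ι' : (E' ⊗[E] h) →ₗ[E'] S') (hS' : IsSymmetricAlgebraUP ι')
    (σ : S →ₐ[E] S) (hσ : ∀ x : h, σ (ι x) = ι (s x))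
    (σ' : S' →ₐ[E'] S')
    (hσ' : ∀ x : E' ⊗[E] h, σ' (ι' x) = ι' (LinearMap.baseChange E' s x))
    (g : S →ₐ[E] S') (hg : ∀ x : h, g (ι x) = ι' ((1 : E') ⊗ₜ[E] x)) :
    Function.Injective (Algebra.TensorProduct.productMap
        (IsScalarTower.toAlgHom E E' S')
        (g.comp (AlgHom.equalizer σ (AlgHom.id E S)).val))
    ∧ (Algebra.TensorProduct.productMap (IsScalarTower.toAlgHom E E' S')
        (g.comp (AlgHom.equalizer σ (AlgHom.id E S)).val)).range
      = Subalgebra.restrictScalars E (AlgHom.equalizer σ' (AlgHom.id E' S')) := by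
  classical
  -- basis and polynomial models
  set κ := Module.Free.ChooseBasisIndex E h with hκ
  set b : Module.Basis κ E h := Module.Free.chooseBasis E h with hb
  let b' : Module.Basis κ E' (E' ⊗[E] h) := b.baseChange E'
  let P := MvPolynomial κ E
  let P' := MvPolynomial κ E'
  let toP : h →ₗ[E] P :=
    (Finsupp.linearCombination E (MvPolynomial.X : κ → P)).comp b.repr.toLinearMap
  let toP' : (E' ⊗[E] h) →ₗ[E'] P' :=
    (Finsupp.linearCombination E' (MvPolynomial.X : κ → P')).comp b'.repr.toLinearMap
  -- the comparison maps e : S →ₐ[E] P and e' : S' →ₐ[E'] P'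
  obtain ⟨ee, hee, -⟩ := hS.existsUnique_lift (ULift.{max v w} P)
    (ULift.moduleEquiv.symm.toLinearMap.comp toP)
  let e : S →ₐ[E] P := (uliftAlgEquiv (R := E)).toAlgHom.comp ee
  have he : ∀ x : h, e (ι x) = toP x := fun x => congrArg ULift.down (hee x)
  obtain ⟨ee', hee', -⟩ := hS'.existsUnique_lift (ULift.{max v w'} P')
    (ULift.moduleEquiv.symm.toLinearMap.comp toP')
  let e' : S' →ₐ[E'] P' := (uliftAlgEquiv (R := E')).toAlgHom.comp ee'
  have he' : ∀ x : E' ⊗[E] h, e' (ι' x) = toP' x := fun x => congrArg ULift.down (hee' x)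
  -- e is bijective
  let F : P →ₐ[E] S := MvPolynomial.aeval fun i => ι (b i)
  have hF1 : ∀ q : P, e (F q) = q := by
    have : e.comp F = AlgHom.id E P := by
      apply MvPolynomial.algHom_ext
      intro i
      rw [AlgHom.comp_apply, AlgHom.id_apply]
      show e (F (MvPolynomial.X i)) = _
      rw [show F (MvPolynomial.X i) = ι (b i) from MvPolynomial.aeval_X _ i, he]
      show (Finsupp.linearCombination E MvPolynomial.X) (b.repr (b i)) = _
      simp
    exact fun q => DFunLike.congr_fun this q
  have hF2 : ∀ x : S, F (e x) = x := by
    have : F.comp e = AlgHom.id E S := hS.algHom_ext fun x => by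
      rw [AlgHom.comp_apply, AlgHom.id_apply, he]
      show F.toLinearMap ((Finsupp.linearCombination E MvPolynomial.X) (b.repr x)) = ι x
      rw [Finsupp.apply_linearCombination]
      have : (⇑F.toLinearMap ∘ MvPolynomial.X : κ → S) = ⇑ι ∘ ⇑b := by
        funext i
        exact MvPolynomial.aeval_X _ i
      rw [this, ← Finsupp.apply_linearCombination, Module.Basis.linearCombination_repr]
    exact fun x => DFunLike.congr_fun this x
  have he_bij : Function.Bijective e :=
    ⟨Function.LeftInverse.injective hF2, fun q => ⟨F q, hF1 q⟩⟩
  -- e' is bijective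
  let F' : P' →ₐ[E'] S' := MvPolynomial.aeval fun i => ι' (b' i)
  have hF1' : ∀ q : P', e' (F' q) = q := by
    have : e'.comp F' = AlgHom.id E' P' := by
      apply MvPolynomial.algHom_ext
      intro i
      rw [AlgHom.comp_apply, AlgHom.id_apply]
      show e' (F' (MvPolynomial.X i)) = _
      rw [show F' (MvPolynomial.X i) = ι' (b' i) from MvPolynomial.aeval_X _ i, he']
      show (Finsupp.linearCombination E' MvPolynomial.X) (b'.repr (b' i)) = _
      simp
    exact fun q => DFunLike.congr_fun this q
  have hF2' : ∀ x : S', F' (e' x) = x := by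
    have : F'.comp e' = AlgHom.id E' S' := hS'.algHom_ext fun x => by
      rw [AlgHom.comp_apply, AlgHom.id_apply, he']
      show F'.toLinearMap ((Finsupp.linearCombination E' MvPolynomial.X) (b'.repr x)) = ι' x
      rw [Finsupp.apply_linearCombination]
      have : (⇑F'.toLinearMap ∘ MvPolynomial.X : κ → S') = ⇑ι' ∘ ⇑b' := by
        funext i
        exact MvPolynomial.aeval_X _ i
      rw [this, ← Finsupp.apply_linearCombination, Module.Basis.linearCombination_repr]
    exact fun x => DFunLike.congr_fun this x
  have he'_bij : Function.Bijective e' :=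
    ⟨Function.LeftInverse.injective hF2', fun q => ⟨F' q, hF1' q⟩⟩
  -- σ is an involution
  have hss : ∀ x : h, s (s x) = x := fun x => by
    have := DFunLike.congr_fun hs x
    simpa using this
  have hσσ : ∀ x : S, σ (σ x) = x := by
    have : σ.comp σ = AlgHom.id E S := hS.algHom_ext fun x => by
      rw [AlgHom.comp_apply, hσ, hσ, hss, AlgHom.id_apply]
    intro x
    have := DFunLike.congr_fun this x
    simpa using this
  -- σ' ∘ g = g ∘ σ
  have hgs : ∀ x : S, σ' (g x) = g (σ x) := by
    have : (σ'.restrictScalars E).comp g = g.comp σ := hS.algHom_ext fun x => by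
      rw [AlgHom.comp_apply, AlgHom.comp_apply, AlgHom.coe_restrictScalars', hg, hσ', hσ, hg,
        LinearMap.baseChange_tmul]
    intro x
    have := DFunLike.congr_fun this x
    simpa using this
  -- the big map Φ
  let Φ : (E' ⊗[E] S) →ₐ[E] S' :=
    Algebra.TensorProduct.productMap (IsScalarTower.toAlgHom E E' S') g
  -- base-change comparison
  have hrep : ∀ x : h, b'.repr ((1 : E') ⊗ₜ[E] x) =
      (b.repr x).mapRange (algebraMap E E') (map_zero _) := by
    intro x
    ext i
    rw [Finsupp.mapRange_apply, Module.Basis.baseChange_repr_tmul, Algebra.algebraMap_eq_smul_one]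
  have hge : ∀ x : S, e' (g x) = MvPolynomial.map (algebraMap E E') (e x) := by
    have : (e'.restrictScalars E).comp g
        = (MvPolynomial.mapAlgHom (σ := κ) (Algebra.ofId E E')).comp e :=
      hS.algHom_ext fun x => by
        rw [AlgHom.comp_apply, AlgHom.comp_apply, AlgHom.coe_restrictScalars', hg, he', he]
        show (Finsupp.linearCombination E' MvPolynomial.X) (b'.repr ((1 : E') ⊗ₜ[E] x)) =
          MvPolynomial.mapAlgHom (Algebra.ofId E E')
            ((Finsupp.linearCombination E MvPolynomial.X) (b.repr x))
        rw [hrep, Finsupp.linearCombination_apply, Finsupp.sum_mapRange_index (by simp),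
          Finsupp.linearCombination_apply, map_finsuppSum]
        refine Finsupp.sum_congr fun i _ => ?_
        have hco : ∀ q : P, (MvPolynomial.mapAlgHom (σ := κ) (Algebra.ofId E E')) q
            = MvPolynomial.map (algebraMap E E') q := fun q => rfl
        have hmap : ∀ c : E, MvPolynomial.map (algebraMap E E') (c • (MvPolynomial.X i : P))
            = algebraMap E E' c • (MvPolynomial.X i : P') := by
          intro c
          rw [MvPolynomial.smul_eq_C_mul, MvPolynomial.smul_eq_C_mul, map_mul,
            MvPolynomial.map_C, MvPolynomial.map_X]
        rw [hco]
        exact (hmap _).symm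
    intro x
    have := DFunLike.congr_fun this x
    simpa using this
  let ψ : (E' ⊗[E] P) ≃ₐ[E'] P' := MvPolynomial.algebraTensorAlgEquiv E E'
  let Me : (E' ⊗[E] S) →ₐ[E] (E' ⊗[E] P) := Algebra.TensorProduct.map (AlgHom.id E E') e
  have hθ : ∀ t : E' ⊗[E] S, e' (Φ t) = ψ (Me t) := by
    have : ((e'.restrictScalars E).comp Φ) =
        ((ψ.toAlgHom.restrictScalars E).comp Me) := by
      apply Algebra.TensorProduct.ext'
      intro a x
      rw [AlgHom.comp_apply, AlgHom.comp_apply, AlgHom.coe_restrictScalars',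
        AlgHom.coe_restrictScalars']
      show e' (Φ (a ⊗ₜ[E] x)) = ψ (Me (a ⊗ₜ[E] x))
      rw [show Φ (a ⊗ₜ[E] x) = algebraMap E' S' a * g x from rfl, map_mul, AlgHom.commutes,
        hge, show Me (a ⊗ₜ[E] x) = a ⊗ₜ[E] (e x) from rfl]
      rw [show (ψ : (E' ⊗[E] P) → P') (a ⊗ₜ[E] (e x))
          = a • MvPolynomial.map (algebraMap E E') (e x) from
        MvPolynomial.algebraTensorAlgEquiv_tmul E E' a (e x), Algebra.smul_def]
    exact fun t => DFunLike.congr_fun this t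
  have hMe_bij : Function.Bijective Me := by
    let MF : (E' ⊗[E] P) →ₐ[E] (E' ⊗[E] S) := Algebra.TensorProduct.map (AlgHom.id E E') F
    have h1 : ∀ t, MF (Me t) = t := by
      have : MF.comp Me = AlgHom.id E (E' ⊗[E] S) := by
        apply Algebra.TensorProduct.ext'
        intro a x
        show MF (Me (a ⊗ₜ[E] x)) = a ⊗ₜ[E] x
        rw [show Me (a ⊗ₜ[E] x) = a ⊗ₜ[E] (e x) from rfl,
          show MF (a ⊗ₜ[E] (e x)) = a ⊗ₜ[E] (F (e x)) from rfl, hF2]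
      exact fun t => DFunLike.congr_fun this t
    have h2 : ∀ t, Me (MF t) = t := by
      have : Me.comp MF = AlgHom.id E (E' ⊗[E] P) := by
        apply Algebra.TensorProduct.ext'
        intro a x
        show Me (MF (a ⊗ₜ[E] x)) = a ⊗ₜ[E] x
        rw [show MF (a ⊗ₜ[E] x) = a ⊗ₜ[E] (F x) from rfl,
          show Me (a ⊗ₜ[E] (F x)) = a ⊗ₜ[E] (e (F x)) from rfl, hF1]
      exact fun t => DFunLike.congr_fun this t
    exact ⟨Function.LeftInverse.injective h1, fun q => ⟨MF q, h2 q⟩⟩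
  have hΦ_bij : Function.Bijective Φ := by
    constructor
    · intro t₁ t₂ hΦt
      apply hMe_bij.1
      apply ψ.injective
      rw [← hθ, ← hθ, hΦt]
    · intro y
      obtain ⟨t, ht⟩ := hMe_bij.2 (ψ.symm (e' y))
      refine ⟨t, he'_bij.1 ?_⟩
      rw [hθ, ht, AlgEquiv.apply_symm_apply]
  -- intertwining of the involutions
  let Mσ : (E' ⊗[E] S) →ₐ[E] (E' ⊗[E] S) :=
    Algebra.TensorProduct.map (AlgHom.id E E') σ
  have hcomm : ∀ t : E' ⊗[E] S, σ' (Φ t) = Φ (Mσ t) := by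
    have : (σ'.restrictScalars E).comp Φ = Φ.comp Mσ := by
      apply Algebra.TensorProduct.ext'
      intro a x
      rw [AlgHom.comp_apply, AlgHom.comp_apply, AlgHom.coe_restrictScalars']
      show σ' (Φ (a ⊗ₜ[E] x)) = Φ (Mσ (a ⊗ₜ[E] x))
      rw [show Φ (a ⊗ₜ[E] x) = algebraMap E' S' a * g x from rfl, map_mul, AlgHom.commutes,
        hgs, show Mσ (a ⊗ₜ[E] x) = a ⊗ₜ[E] (σ x) from rfl]
      rfl
    exact fun t => DFunLike.congr_fun this t
  -- the invariants subalgebra and the projector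
  set A₀ := AlgHom.equalizer σ (AlgHom.id E S) with hA₀
  let inc : A₀ →ₐ[E] S := A₀.val
  let J : (E' ⊗[E] A₀) →ₐ[E] (E' ⊗[E] S) :=
    Algebra.TensorProduct.map (AlgHom.id E E') inc
  have hTJ : (Algebra.TensorProduct.productMap (IsScalarTower.toAlgHom E E' S')
      (g.comp (AlgHom.equalizer σ (AlgHom.id E S)).val)) = Φ.comp J := by
    apply Algebra.TensorProduct.ext'
    intro a x
    rfl
  -- half
  let half : E := ↑h2.unit⁻¹
  have hhalf : half * 2 = 1 := h2.val_inv_mul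
  let p : S →ₗ[E] S := half • (LinearMap.id + σ.toLinearMap)
  have hp_mem : ∀ x : S, p x ∈ Subalgebra.toSubmodule A₀ := by
    intro x
    rw [Subalgebra.mem_toSubmodule, hA₀, AlgHom.mem_equalizer, AlgHom.id_apply]
    show σ (half • (x + σ x)) = half • (x + σ x)
    rw [map_smul, map_add, hσσ x, add_comm]
  let r : S →ₗ[E] A₀ := p.codRestrict _ hp_mem
  have hri : ∀ x : A₀, r (inc x) = x := by
    intro x
    apply Subtype.ext
    show half • ((inc x) + σ (inc x)) = (x : S)
    have hx : σ (inc x) = inc x := by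
      have hm : σ (inc x) = (AlgHom.id E S) (inc x) :=
        (AlgHom.mem_equalizer σ (AlgHom.id E S) (inc x)).mp (SetLike.coe_mem x)
      simpa using hm
    rw [hx, ← two_smul E, smul_smul, hhalf, one_smul]
    rfl
  -- J agrees with lTensor of inc, and is injective
  have hJl : ∀ t : E' ⊗[E] A₀, J t = LinearMap.lTensor E' inc.toLinearMap t := by
    have : J.toLinearMap = LinearMap.lTensor E' inc.toLinearMap := by
      apply TensorProduct.ext'
      intro a x
      rfl
    exact fun t => DFunLike.congr_fun this t
  have hJretr : ∀ z, LinearMap.lTensor E' r (J z) = z := by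
    intro z
    rw [hJl, ← LinearMap.comp_apply, ← LinearMap.lTensor_comp,
      show r ∘ₗ inc.toLinearMap = LinearMap.id from LinearMap.ext hri,
      LinearMap.lTensor_id, LinearMap.id_apply]
  have hJ_inj : Function.Injective J := by
    intro z₁ z₂ hz
    rw [← hJretr z₁, ← hJretr z₂, hz]
  -- Mσ agrees with lTensor of σ
  have hMl : ∀ t : E' ⊗[E] S, Mσ t = LinearMap.lTensor E' σ.toLinearMap t := by
    have : Mσ.toLinearMap = LinearMap.lTensor E' σ.toLinearMap := by
      apply TensorProduct.ext'
      intro a x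
      rfl
    exact fun t => DFunLike.congr_fun this t
  -- fixed points of lTensor σ lie in the range of J
  have hfix : ∀ t : E' ⊗[E] S, Mσ t = t → ∃ z, J z = t := by
    intro t ht
    have hfixl : LinearMap.lTensor E' σ.toLinearMap t = t := by rw [← hMl]; exact ht
    have hpt : LinearMap.lTensor E' p t = t := by
      have hlt : LinearMap.lTensor E' p
          = half • (LinearMap.id + LinearMap.lTensor E' σ.toLinearMap) := by
        show LinearMap.lTensor E' (half • (LinearMap.id + σ.toLinearMap)) = _
        rw [LinearMap.lTensor_smul, LinearMap.lTensor_add, LinearMap.lTensor_id]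
      rw [hlt, LinearMap.smul_apply, LinearMap.add_apply, LinearMap.id_apply, hfixl,
        ← two_smul E, smul_smul, hhalf, one_smul]
    refine ⟨LinearMap.lTensor E' r t, ?_⟩
    rw [hJl, ← LinearMap.comp_apply, ← LinearMap.lTensor_comp,
      show inc.toLinearMap ∘ₗ r = p from LinearMap.ext fun x => rfl, hpt]
  constructor
  · rw [hTJ]
    exact hΦ_bij.1.comp hJ_inj
  · ext y
    rw [Subalgebra.mem_restrictScalars]
    constructor
    · rintro ⟨z, rfl⟩
      rw [AlgHom.mem_equalizer]
      show σ' _ = _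
      rw [hTJ]
      show σ' (Φ (J z)) = Φ (J z)
      rw [hcomm]
      have hMJ : Mσ (J z) = J z := by
        have : Mσ.comp J = J := by
          apply Algebra.TensorProduct.ext'
          intro a x
          have hx : σ (inc x) = inc x := by
            have hm : σ (inc x) = (AlgHom.id E S) (inc x) :=
              (AlgHom.mem_equalizer σ (AlgHom.id E S) (inc x)).mp (SetLike.coe_mem x)
            simpa using hm
          show Mσ (J (a ⊗ₜ[E] x)) = J (a ⊗ₜ[E] x)
          rw [show J (a ⊗ₜ[E] x) = a ⊗ₜ[E] (inc x) from rfl,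
            show Mσ (a ⊗ₜ[E] (inc x)) = a ⊗ₜ[E] (σ (inc x)) from rfl, hx]
        exact DFunLike.congr_fun this z
      rw [hMJ]
    · intro hy
      rw [AlgHom.mem_equalizer] at hy
      obtain ⟨t, rfl⟩ := hΦ_bij.2 y
      have ht : Mσ t = t := hΦ_bij.1 (by rw [← hcomm]; exact hy)
      obtain ⟨z, rfl⟩ := hfix t ht
      exact ⟨z, by rw [hTJ]; rfl⟩
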